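/- arXiv:2603.23827 — 4 statements merged into one kernel-verified Lean document; each statement's English description precedes it below -/
import Mathlib

section
/- Define ‖·‖ on monomials of 𝒟^∞W̃_q by ‖c_{i,(l)}‖ = max{i − l, 0}, ‖h_{i,(0)}‖ = 0, ‖h_{i,(l)}‖ = max{i − l, 0} for l ≥ 1, extended additively over products. Then the derivation K = Σ K_i satisfies ‖K(φ)‖ ≥ ‖φ‖ − 1 for every monomial φ (whenever K(φ) ≠ 0, each monomial appearing in K(φ) has ‖·‖ ≥ ‖φ‖ − 1). -/
/-- The norm `‖·‖` of a generator of `𝒟^∞W̃_q`: a generator is encoded as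
`(b, i, l) : Bool × Fin q × ℕ`, where `b = true` means `c_{i+1,(l)}` and `b = false` means
`h_{i+1,(l)}` (the paper's indices run from `1` to `q`).  By definition
`‖c_{i,(l)}‖ = max{i − l, 0}`, `‖h_{i,(0)}‖ = 0` and `‖h_{i,(l)}‖ = max{i − l, 0}` for
`l ≥ 1` (truncated subtraction on `ℕ` realizes the `max` with `0`). -/
def nrm (q : ℕ) : Bool × Fin q × ℕ → ℕ :=
  fun x => if x.1 = false ∧ x.2.2 = 0 then 0 else ((x.2.1 : ℕ) + 1) - x.2.2

/-- The derivation `K = Σ K_i` replaces one factor `c_{j,(l)}` of a monomial by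
`h_{j,(l+1)}` (up to sign).  The norm `‖·‖`, extended additively over the factors of a
monomial, satisfies `‖K(φ)‖ ≥ ‖φ‖ − 1` for every monomial `φ`: each monomial appearing in
`K(φ)` — i.e. each monomial obtained from `φ` by replacing one `c_{j,(l)}`-factor by
`h_{j,(l+1)}` — has norm at least `‖φ‖ − 1`. -/
theorem stmt8 (q : ℕ) (L₁ L₂ : List (Bool × Fin q × ℕ)) (j : Fin q) (l : ℕ) :
    ((L₁ ++ [(true, j, l)] ++ L₂).map (nrm q)).sum
      ≤ ((L₁ ++ [(false, j, l + 1)] ++ L₂).map (nrm q)).sum + 1 := by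
  simp only [List.map_append, List.sum_append, List.map_cons, List.map_nil, List.sum_cons,
    List.sum_nil, nrm]
  rw [if_neg (by simp), if_neg (by simp)]
  omega
end

section
/- Let V = ⊕_{k≥0} V^k with linear maps δ: V^k → V^{k+1}, σ: V^k → V^{k−1} satisfying σδ − δσ = k·id on V^k and σ = 0 on V^0 and V^1. Set λ_{m,k} = ½(m−1)(2k−m). Then V^0 is the 0-eigenspace of δσ, and for each k ≥ 1, V^k decomposes as the direct sum ⊕_{m=1}^k F_{λ_{m,k},k}, where F_{λ,k} is the λ-eigenspace of δ∘σ on V^k. Moreover δ is injective on ⊕_{k≥1} V^k. -/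
/-- `λ_{m,k} = ½(m−1)(2k−m)`. -/
noncomputable def lam (m k : ℕ) : ℝ := ((m : ℝ) - 1) * (2 * (k : ℝ) - (m : ℝ)) / 2

lemma lam_succ' (m k : ℕ) : lam m k + (k : ℝ) = lam (m + 1) (k + 1) := by
  unfold lam; push_cast; ring

lemma lam_pos' {m k : ℕ} (h1 : 2 ≤ m) (h2 : m ≤ k) : 0 < lam m k := by
  unfold lam
  have a1 : (2 : ℝ) ≤ (m : ℝ) := by exact_mod_cast h1
  have a2 : (m : ℝ) ≤ (k : ℝ) := by exact_mod_cast h2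
  nlinarith

lemma lam_nonneg' {m k : ℕ} (h1 : 1 ≤ m) (h2 : m ≤ k) : 0 ≤ lam m k := by
  unfold lam
  have a1 : (1 : ℝ) ≤ (m : ℝ) := by exact_mod_cast h1
  have a2 : (m : ℝ) ≤ (k : ℝ) := by exact_mod_cast h2
  nlinarith

lemma lam_lt' {m m' k : ℕ} (h1 : 1 ≤ m) (hlt : m < m') (h2 : m' ≤ k) :
    lam m k < lam m' k := by
  unfold lam
  have a1 : (1 : ℝ) ≤ (m : ℝ) := by exact_mod_cast h1
  have a2 : (m : ℝ) + 1 ≤ (m' : ℝ) := by exact_mod_cast hlt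
  have a3 : (m' : ℝ) ≤ (k : ℝ) := by exact_mod_cast h2
  nlinarith

/-- Structure theorem.  Let `V = ⊕_{k≥0} V^k` (an internal direct sum decomposition of a real
vector space) with linear maps `δ : V^k → V^{k+1}`, `σ : V^k → V^{k−1}` satisfying
`σδ − δσ = k·id` on `V^k` and `σ = 0` on `V^0` and `V^1`.  Then: `V^0` lies in the
`0`-eigenspace of `δ∘σ`; for each `k ≥ 1`, `V^k` decomposes as the direct sum
`⊕_{m=1}^k F_{λ_{m,k},k}`, where `F_{λ,k}` is the `λ`-eigenspace of `δ∘σ` on `V^k`;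
and `δ` is injective on `⊕_{k≥1} V^k`. -/
theorem stmt11 {M : Type*} [AddCommGroup M] [Module ℝ M]
    (V : ℕ → Submodule ℝ M)
    (hindep : iSupIndep V) (hsup : iSup V = ⊤)
    (δ σ : M →ₗ[ℝ] M)
    (hδ : ∀ k, ∀ x ∈ V k, δ x ∈ V (k + 1))
    (hσ : ∀ k, ∀ x ∈ V k, σ x ∈ V (k - 1))
    (hcomm : ∀ k, ∀ x ∈ V k, σ (δ x) - δ (σ x) = (k : ℝ) • x)
    (hσ0 : ∀ x ∈ V 0, σ x = 0) (hσ1 : ∀ x ∈ V 1, σ x = 0) :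
    (∀ x ∈ V 0, δ (σ x) = 0) ∧
    (∀ k : ℕ, 1 ≤ k →
      (V k = ⨆ m ∈ Finset.Icc 1 k,
          V k ⊓ Module.End.eigenspace (δ ∘ₗ σ) (lam m k)) ∧
      iSupIndep fun m : Finset.Icc 1 k =>
          V k ⊓ Module.End.eigenspace (δ ∘ₗ σ) (lam (m : ℕ) k)) ∧
    (∀ x ∈ ⨆ k ∈ Set.Ici 1, V k, δ x = 0 → x = 0) := by
  -- The key spanning claim, by induction.
  have key : ∀ k : ℕ, ∀ x ∈ V (k+1),
      x ∈ ⨆ m ∈ Finset.Icc 1 (k+1),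
        (V (k+1) ⊓ Module.End.eigenspace (δ ∘ₗ σ) (lam m (k+1))) := by
    intro k
    induction k with
    | zero =>
      intro x hx
      have hxe : x ∈ V 1 ⊓ Module.End.eigenspace (δ ∘ₗ σ) (lam 1 1) := by
        refine Submodule.mem_inf.mpr ⟨hx, ?_⟩
        rw [Module.End.mem_eigenspace_iff]
        show δ (σ x) = lam 1 1 • x
        rw [hσ1 x hx, map_zero]
        norm_num [lam]
      exact Submodule.mem_iSup_of_mem 1
        (Submodule.mem_iSup_of_mem (Finset.mem_Icc.mpr ⟨le_refl 1, le_refl 1⟩) hxe)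
    | succ k ih =>
      intro x hx
      have hσx : σ x ∈ V (k+1) := by simpa using hσ (k+2) x hx
      obtain ⟨μ, hμ⟩ := (Submodule.mem_iSup_finset_iff_exists_sum _ _).mp (ih (σ x) hσx)
      have hmemV : ∀ m : ℕ, ((μ m : M)) ∈ V (k+1) := fun m => (Submodule.mem_inf.mp (μ m).2).1
      have hmemE : ∀ m : ℕ, δ (σ (μ m : M)) = lam m (k+1) • (μ m : M) := fun m =>
        Module.End.mem_eigenspace_iff.mp (Submodule.mem_inf.mp (μ m).2).2
      have heig : ∀ m : ℕ, δ (σ (δ (μ m : M))) = lam (m+1) (k+2) • δ (μ m : M) := by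
        intro m
        have hc : σ (δ (μ m : M)) = δ (σ (μ m : M)) + ((k+1 : ℕ) : ℝ) • (μ m : M) :=
          sub_eq_iff_eq_add'.mp (hcomm (k+1) _ (hmemV m))
        rw [hc, hmemE m, map_add, map_smul, map_smul, ← add_smul]
        congr 1
        have := lam_succ' m (k+1)
        push_cast at this ⊢
        linarith
      have hwV : ∀ m : ℕ, δ (μ m : M) ∈ V (k+2) := fun m => hδ (k+1) _ (hmemV m)
      have hlampos : ∀ m ∈ Finset.Icc 1 (k+1), 0 < lam (m+1) (k+2) := by
        intro m hm
        rw [Finset.mem_Icc] at hm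
        exact lam_pos' (by omega) (by omega)
      set y : M := ∑ m ∈ Finset.Icc 1 (k+1), (lam (m+1) (k+2))⁻¹ • δ (μ m : M) with hy
      have hyV : y ∈ V (k+2) :=
        Submodule.sum_mem _ fun m _ => Submodule.smul_mem _ _ (hwV m)
      have hAx : δ (σ x) = ∑ m ∈ Finset.Icc 1 (k+1), δ ((μ m : M)) := by
        rw [← hμ, map_sum]
      have hAy : δ (σ y) = δ (σ x) := by
        rw [hy, map_sum, map_sum, hAx]
        refine Finset.sum_congr rfl fun m hm => ?_
        rw [map_smul, map_smul, heig m, smul_smul, inv_mul_cancel₀ (hlampos m hm).ne', one_smul]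
      have hxy : x - y ∈ V (k+2) ⊓ Module.End.eigenspace (δ ∘ₗ σ) (lam 1 (k+2)) := by
        refine Submodule.mem_inf.mpr ⟨Submodule.sub_mem _ hx hyV, ?_⟩
        rw [Module.End.mem_eigenspace_iff]
        show δ (σ (x - y)) = lam 1 (k+2) • (x - y)
        rw [map_sub, map_sub, hAy, sub_self]
        norm_num [lam]
      have hxsplit : x = (x - y) + y := (sub_add_cancel x y).symm
      rw [hxsplit]
      refine Submodule.add_mem _ ?_ ?_
      · exact Submodule.mem_iSup_of_mem 1
          (Submodule.mem_iSup_of_mem (Finset.mem_Icc.mpr ⟨le_refl 1, by omega⟩) hxy)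
      · refine Submodule.sum_mem _ fun m hm => ?_
        rw [Finset.mem_Icc] at hm
        have hmm : m + 1 ∈ Finset.Icc 1 (k+2) := Finset.mem_Icc.mpr ⟨by omega, by omega⟩
        refine Submodule.mem_iSup_of_mem (m+1) (Submodule.mem_iSup_of_mem hmm
          (Submodule.smul_mem _ _ (Submodule.mem_inf.mpr ⟨hwV m, ?_⟩)))
        exact Module.End.mem_eigenspace_iff.mpr (heig m)
  have key' : ∀ k : ℕ, 1 ≤ k → ∀ x ∈ V k,
      x ∈ ⨆ m ∈ Finset.Icc 1 k,
        (V k ⊓ Module.End.eigenspace (δ ∘ₗ σ) (lam m k)) := by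
    intro k hk
    obtain ⟨j, rfl⟩ := Nat.exists_eq_succ_of_ne_zero (by omega : k ≠ 0)
    exact key j
  refine ⟨fun x hx => by rw [hσ0 x hx, map_zero], fun k hk => ⟨?_, ?_⟩, ?_⟩
  · -- spanning
    refine le_antisymm (fun x hx => key' k hk x hx) (iSup₂_le fun m _ => inf_le_left)
  · -- independence
    have hinj : Function.Injective (fun m : (Finset.Icc 1 k) => lam (m : ℕ) k) := by
      intro a b hab
      have ha := Finset.mem_Icc.mp a.2
      have hb := Finset.mem_Icc.mp b.2
      ext
      rcases lt_trichotomy (a : ℕ) (b : ℕ) with h | h | h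
      · exact absurd hab (lam_lt' ha.1 h hb.2).ne
      · exact h
      · exact absurd hab.symm (lam_lt' hb.1 h ha.2).ne
    exact ((Module.End.eigenspaces_iSupIndep (δ ∘ₗ σ)).comp hinj).mono
      fun m => inf_le_right
  · -- injectivity of δ
    intro x hx hδx
    rw [← iSup_subtype'' (Set.Ici 1) V] at hx
    obtain ⟨f, hf, hsum⟩ := (Submodule.mem_iSup_iff_exists_finsupp _ _).mp hx
    rw [← hsum, Finsupp.sum, map_sum] at hδx
    have hz : ∀ i ∈ f.support, δ (f i) = 0 := by
      intro i hi
      have hrest : δ (f i) = -∑ j ∈ f.support.erase i, δ (f j) :=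
        eq_neg_of_add_eq_zero_left ((Finset.add_sum_erase _ _ hi).trans hδx)
      have hmem2 : (-∑ j ∈ f.support.erase i, δ (f j)) ∈
          ⨆ (l : ℕ) (_ : l ≠ (i : ℕ) + 1), V l := by
        refine Submodule.neg_mem _ (Submodule.sum_mem _ fun j hj => ?_)
        have hne : (j : ℕ) + 1 ≠ (i : ℕ) + 1 := by
          have := Subtype.coe_injective.ne (Finset.ne_of_mem_erase hj)
          omega
        exact Submodule.mem_iSup_of_mem ((j : ℕ) + 1)
          (Submodule.mem_iSup_of_mem hne (hδ _ _ (hf j)))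
      exact Submodule.disjoint_def.mp (hindep ((i : ℕ) + 1)) _
        (hδ _ _ (hf i)) (hrest ▸ hmem2)
    have hz2 : ∀ i ∈ f.support, f i = 0 := by
      intro i hi
      have hcm := hcomm (i : ℕ) (f i) (hf i)
      rw [hz i hi, map_zero, zero_sub] at hcm
      have he : f i ∈ Module.End.eigenspace (δ ∘ₗ σ) (-((i : ℕ) : ℝ)) := by
        rw [Module.End.mem_eigenspace_iff]
        show δ (σ (f i)) = -((i : ℕ) : ℝ) • f i
        rw [neg_smul, ← hcm, neg_neg]
      have hk1 : 1 ≤ (i : ℕ) := i.2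
      have hle : (⨆ m ∈ Finset.Icc 1 (i : ℕ),
            (V (i : ℕ) ⊓ Module.End.eigenspace (δ ∘ₗ σ) (lam m (i : ℕ)))) ≤
          ⨆ (ν : ℝ) (_ : ν ≠ -((i : ℕ) : ℝ)), Module.End.eigenspace (δ ∘ₗ σ) ν := by
        refine iSup₂_le fun m hm => le_trans inf_le_right ?_
        rw [Finset.mem_Icc] at hm
        have hne : lam m (i : ℕ) ≠ -((i : ℕ) : ℝ) := by
          have h1 : (0:ℝ) ≤ lam m (i : ℕ) := lam_nonneg' hm.1 hm.2
          have h2 : (1:ℝ) ≤ ((i : ℕ) : ℝ) := by exact_mod_cast hk1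
          intro h
          rw [h] at h1
          linarith
        exact le_iSup₂ (f := fun (ν : ℝ) (_ : ν ≠ -((i : ℕ) : ℝ)) =>
          Module.End.eigenspace (δ ∘ₗ σ) ν) (lam m (i : ℕ)) hne
      exact Submodule.disjoint_def.mp
        (Module.End.eigenspaces_iSupIndep (δ ∘ₗ σ) (-((i : ℕ) : ℝ))) _ he
        (hle (key' (i : ℕ) hk1 (f i) (hf i)))
    rw [← hsum, Finsupp.sum]
    exact Finset.sum_eq_zero hz2
end

section
/- Under the hypotheses of the eigenspace decomposition (V = ⊕ V^k, σδ − δσ = k on V^k, σ = 0 on V^0 ⊕ V^1), the projector p_{1,k}: V^k → F_{0,k} onto the 0-eigenspace of δσ is given by p_{1,k} = Σ_{i=0}^{k−1} (−1)^i · (2^i (2k−i−2)!)/((2k−2)! i!) · δ^i ∘ σ^i. -/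
lemma lam_strictMono {a b k : ℕ} (ha : 1 ≤ a) (hab : a < b) (hbk : b ≤ k) :
    lam a k < lam b k := by
  unfold lam
  have h1 : (1 : ℝ) ≤ (a : ℝ) := by exact_mod_cast ha
  have h2 : (a : ℝ) + 1 ≤ (b : ℝ) := by exact_mod_cast hab
  have h3 : (b : ℝ) ≤ (k : ℝ) := by exact_mod_cast hbk
  nlinarith [h1, h2, h3]

lemma lam_one (k : ℕ) : lam 1 k = 0 := by simp [lam]

/-- Projector formula.  Under the hypotheses of the eigenspace decomposition
(`V = ⊕ V^k`, `σδ − δσ = k·id` on `V^k`, `σ = 0` on `V^0 ⊕ V^1`), the projector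
`p_{1,k} : V^k → F_{0,k}` onto the `0`-eigenspace of `δ∘σ` (along the other eigenspaces
`F_{λ_{m,k},k}`, `2 ≤ m ≤ k`) is given by
`p_{1,k} = Σ_{i=0}^{k−1} (−1)^i 2^i (2k−i−2)! / ((2k−2)! i!) · δ^i ∘ σ^i`:
for `x ∈ V^k`, the element `p = Σ_i … δ^i(σ^i x)` lies in `V^k`, is killed by `δ∘σ`,
and `x − p` lies in `⊕_{m=2}^k F_{λ_{m,k},k}`. -/
theorem stmt12 {M : Type*} [AddCommGroup M] [Module ℝ M]
    (V : ℕ → Submodule ℝ M)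
    (hindep : iSupIndep V) (hsup : iSup V = ⊤)
    (δ σ : Module.End ℝ M)
    (hδ : ∀ k, ∀ x ∈ V k, δ x ∈ V (k + 1))
    (hσ : ∀ k, ∀ x ∈ V k, σ x ∈ V (k - 1))
    (hcomm : ∀ k, ∀ x ∈ V k, σ (δ x) - δ (σ x) = (k : ℝ) • x)
    (hσ0 : ∀ x ∈ V 0, σ x = 0) (hσ1 : ∀ x ∈ V 1, σ x = 0)
    (k : ℕ) (hk : 1 ≤ k) (x : M) (hx : x ∈ V k) :
    ∀ p : M,
      p = ∑ i ∈ Finset.range k,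
          (((-1 : ℝ) ^ i * 2 ^ i * (Nat.factorial (2 * k - i - 2))) /
              ((Nat.factorial (2 * k - 2)) * (Nat.factorial i))) • (δ ^ i) ((σ ^ i) x) →
      p ∈ V k ∧ δ (σ p) = 0 ∧
      x - p ∈ ⨆ m ∈ Finset.Icc 2 k, V k ⊓ Module.End.eigenspace (δ * σ) (lam m k) := by
  intro p hp
  classical
  set y : ℕ → M := fun i => (σ ^ i) x with hy
  set c : ℕ → ℝ := fun i =>
      ((-1 : ℝ) ^ i * 2 ^ i * (Nat.factorial (2 * k - i - 2))) /
        ((Nat.factorial (2 * k - 2)) * (Nat.factorial i)) with hc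
  have hys : ∀ i, y (i + 1) = σ (y i) := by
    intro i
    show (σ ^ (i+1)) x = σ ((σ ^ i) x)
    rw [pow_succ']
    rfl
  have hyV : ∀ i, y i ∈ V (k - i) := by
    intro i
    induction i with
    | zero => simpa [hy] using hx
    | succ n ih =>
      rw [hys]
      have := hσ (k - n) (y n) ih
      rwa [Nat.sub_sub] at this
  have hyk0 : y k = 0 := by
    obtain ⟨j, rfl⟩ : ∃ j, k = j + 1 := ⟨k - 1, by omega⟩
    rw [hys]
    apply hσ1
    have := hyV j
    rwa [show j + 1 - j = 1 by omega] at this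
  have hδpow : ∀ (i j : ℕ), ∀ v ∈ V j, (δ ^ i) v ∈ V (j + i) := by
    intro i
    induction i with
    | zero => intro j v hv; simpa using hv
    | succ n ih =>
      intro j v hv
      have h1 : (δ ^ (n+1)) v = δ ((δ ^ n) v) := by rw [pow_succ']; rfl
      rw [h1]
      exact hδ (j + n) _ (ih j v hv)
  have hterm : ∀ i, i ≤ k → (δ ^ i) (y i) ∈ V k := by
    intro i hik
    have := hδpow i (k - i) (y i) (hyV i)
    rwa [Nat.sub_add_cancel hik] at this
  have hσδ : ∀ (j : ℕ), ∀ v ∈ V j, σ (δ v) = (j : ℝ) • v + δ (σ v) := by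
    intro j v hv
    have h := hcomm j v hv
    linear_combination (norm := module) h
  have hcommPow : ∀ (i j : ℕ), ∀ v ∈ V j,
      σ ((δ ^ (i+1)) v) = (δ ^ (i+1)) (σ v) +
        (((i:ℝ)+1) * (j:ℝ) + (i:ℝ)*((i:ℝ)+1)/2) • (δ ^ i) v := by
    intro i
    induction i with
    | zero =>
      intro j v hv
      have h := hσδ j v hv
      simp only [zero_add, pow_one, pow_zero, Nat.cast_zero, Module.End.one_apply]
      rw [h]
      module
    | succ n ih =>
      intro j v hv
      have e1 : (δ ^ (n+2)) v = (δ ^ (n+1)) (δ v) := by rw [pow_succ]; rfl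
      have e2 : (δ ^ (n+1)) (δ (σ v)) = (δ ^ (n+2)) (σ v) := by rw [pow_succ]; rfl
      have e3 : (δ ^ n) (δ v) = (δ ^ (n+1)) v := by rw [pow_succ]; rfl
      rw [e1, ih (j+1) (δ v) (hδ j v hv), hσδ j v hv, map_add, map_smul, e2, e3]
      push_cast
      module
  -- the key identity
  have hkey : ∀ i, i + 1 ≤ k →
      δ (σ ((δ ^ i) (y i))) = (δ ^ (i+1)) (y (i+1)) + lam (i+1) k • (δ ^ i) (y i) := by
    intro i hik
    match i with
    | 0 =>
      simp only [zero_add, pow_zero, pow_one, Module.End.one_apply, lam_one, zero_smul,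
        add_zero]
      rw [hys]
    | Nat.succ t =>
      have hv := hyV (t+1)
      have h := hcommPow t (k - (t+1)) (y (t+1)) hv
      rw [h, map_add, map_smul]
      have e2 : δ ((δ ^ (t+1)) (σ (y (t+1)))) = (δ ^ (t+2)) (σ (y (t+1))) := by
        conv_rhs => rw [pow_succ']
        rfl
      have e3 : δ ((δ ^ t) (y (t+1))) = (δ ^ (t+1)) (y (t+1)) := by
        conv_rhs => rw [pow_succ']
        rfl
      rw [e2, e3, ← hys]
      congr 1
      congr 1
      have hcast : ((k - (t+1) : ℕ) : ℝ) = (k : ℝ) - (t:ℝ) - 1 := by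
        have hn : k - (t+1) + (t+1) = k := by omega
        have h' := congrArg (fun n : ℕ => (n:ℝ)) hn
        push_cast at h'
        linarith
      rw [hcast]
      unfold lam
      push_cast
      ring
  -- the recurrence for the coefficients
  have hfacpos : (0:ℝ) < (Nat.factorial (2*k-2)) := by exact_mod_cast Nat.factorial_pos _
  have hrec : ∀ (j : ℕ), j + 1 < k → c (j+1) * lam (j+1+1) k = - c j := by
    intro j hjk
    have hA : 2*k - j - 2 = (2*k - (j+1) - 2) + 1 := by omega
    have hfj : ((Nat.factorial j : ℝ)) ≠ 0 := by
      exact_mod_cast (Nat.factorial_pos j).ne'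
    have hf2 : ((Nat.factorial (2*k-2) : ℝ)) ≠ 0 := hfacpos.ne'
    have hj1 : (j:ℝ) + 1 ≠ 0 := by positivity
    have hcastA : ((2*k - (j+1) - 2 : ℕ) : ℝ) = 2*(k:ℝ) - (j:ℝ) - 3 := by
      have hn : 2*k - (j+1) - 2 + (j + 3) = 2*k := by omega
      have h' := congrArg (fun n : ℕ => (n:ℝ)) hn
      push_cast at h'
      linarith
    simp only [hc]
    rw [hA, Nat.factorial_succ, Nat.factorial_succ]
    unfold lam
    push_cast [hcastA]
    field_simp
    ring
  -- Part 1: p ∈ V k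
  have hpV : p ∈ V k := by
    rw [hp]
    refine Submodule.sum_mem _ ?_
    intro i hi
    exact Submodule.smul_mem _ _ (hterm i (Finset.mem_range.mp hi).le)
  -- Part 2: δ (σ p) = 0 via telescoping
  have hk0 : k ≠ 0 := by omega
  set G : ℕ → M := fun n => if n = 0 then 0 else c (n-1) • (δ ^ n) (y n) with hG
  have hGsucc : ∀ j : ℕ, G (j+1) = c j • (δ ^ (j+1)) (y (j+1)) := by
    intro j; simp [hG]
  have hδσp : δ (σ p) = 0 := by
    rw [hp, map_sum, map_sum]
    have hcg : ∀ i ∈ Finset.range k,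
        δ (σ (c i • (δ ^ i) (y i))) = G (i+1) - G i := by
      intro i hi
      rw [Finset.mem_range] at hi
      rw [map_smul, map_smul, hkey i hi, hGsucc]
      match i with
      | 0 =>
        simp only [hG, if_pos rfl, zero_add, lam_one, zero_smul, smul_zero, add_zero,
          sub_zero]
      | Nat.succ j =>
        simp only [Nat.succ_eq_add_one]
        have hr := hrec j hi
        rw [hGsucc j, smul_add, smul_smul, hr]
        module
    rw [Finset.sum_congr rfl hcg, Finset.sum_range_sub]
    simp [hG, hk0, hyk0]
  -- the value of c 0
  have hc0 : c 0 = 1 := by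
    simp only [hc]
    rw [show 2*k - 0 - 2 = 2*k - 2 by omega]
    simp only [pow_zero, one_mul, Nat.factorial_zero, Nat.cast_one, mul_one]
    exact div_self hfacpos.ne'
  -- Part 3
  have hW : ∀ (d i : ℕ), k = i + d → 1 ≤ i →
      (δ ^ i) (y i) ∈ ⨆ m ∈ Finset.Icc (i+1) k,
        (V k ⊓ Module.End.eigenspace (δ * σ) (lam m k)) := by
    intro d
    induction d with
    | zero =>
      intro i hkd hi
      obtain rfl : i = k := by omega
      rw [hyk0, map_zero]
      exact zero_mem _
    | succ d ih =>
      intro i hkd hi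
      have hik1 : i + 1 ≤ k := by omega
      have hprev := ih (i+1) (by omega) (by omega)
      rw [Submodule.mem_iSup_finset_iff_exists_sum] at hprev
      obtain ⟨μ, hμ⟩ := hprev
      set z : M := ∑ m ∈ Finset.Icc (i+1+1) k,
          (lam m k - lam (i+1) k)⁻¹ • ((μ m : M)) with hz
      have hUV : ∀ m, (V k ⊓ Module.End.eigenspace (δ * σ) (lam m k)) ≤ V k :=
        fun m => inf_le_left
      have hzV : z ∈ V k :=
        Submodule.sum_mem _ fun m hm => Submodule.smul_mem _ _ (hUV m (μ m).2)
      have hTz : (δ * σ) z - lam (i+1) k • z = (δ ^ (i+1)) (y (i+1)) := by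
        rw [← hμ, hz, map_sum, Finset.smul_sum, ← Finset.sum_sub_distrib]
        refine Finset.sum_congr rfl ?_
        intro m hm
        rw [Finset.mem_Icc] at hm
        have hlt : lam (i+1) k < lam m k := lam_strictMono (by omega) (by omega) hm.2
        have hne : lam m k - lam (i+1) k ≠ 0 := sub_ne_zero.mpr hlt.ne'
        have hem : (δ * σ) ((μ m : M)) = lam m k • ((μ m : M)) :=
          Module.End.mem_eigenspace_iff.mp (Submodule.mem_inf.mp (μ m).2).2
        rw [map_smul, hem, smul_smul, smul_smul, ← sub_smul,
          show (lam m k - lam (i+1) k)⁻¹ * lam m k -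
              lam (i+1) k * (lam m k - lam (i+1) k)⁻¹ = 1 by field_simp,
          one_smul]
      have h1 : (δ * σ) ((δ ^ i) (y i)) =
          (δ ^ (i+1)) (y (i+1)) + lam (i+1) k • (δ ^ i) (y i) := hkey i hik1
      have hvmem : (δ ^ i) (y i) - z ∈
          (V k ⊓ Module.End.eigenspace (δ * σ) (lam (i+1) k)) := by
        refine Submodule.mem_inf.mpr ⟨Submodule.sub_mem _ (hterm i (by omega)) hzV, ?_⟩
        rw [Module.End.mem_eigenspace_iff, map_sub, h1]
        linear_combination (norm := module) -hTz
      have hsplit : (δ ^ i) (y i) = ((δ ^ i) (y i) - z) + z := by abel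
      rw [hsplit]
      refine Submodule.add_mem _ ?_ (Submodule.sum_mem _ ?_)
      · have hmem : i + 1 ∈ Finset.Icc (i+1) k := Finset.mem_Icc.mpr ⟨le_refl _, hik1⟩
        exact le_iSup₂ (f := fun m (_ : m ∈ Finset.Icc (i+1) k) =>
          (V k ⊓ Module.End.eigenspace (δ * σ) (lam m k))) (i+1) hmem hvmem
      · intro m hm
        rw [Finset.mem_Icc] at hm
        have hm' : m ∈ Finset.Icc (i+1) k := Finset.mem_Icc.mpr ⟨by omega, hm.2⟩
        exact Submodule.smul_mem _ _
          (le_iSup₂ (f := fun m (_ : m ∈ Finset.Icc (i+1) k) =>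
            (V k ⊓ Module.End.eigenspace (δ * σ) (lam m k))) m hm' (μ m).2)
  refine ⟨hpV, hδσp, ?_⟩
  rw [show x - p = -(p - x) from (neg_sub p x).symm]
  refine Submodule.neg_mem _ ?_
  have hpx : p - x = ∑ i ∈ Finset.Ico 1 k, c i • (δ ^ i) (y i) := by
    rw [hp, Finset.range_eq_Ico, Finset.sum_eq_sum_Ico_succ_bot (by omega : 0 < k)]
    have hf0 : c 0 • (δ ^ 0) (y 0) = x := by
      rw [hc0, one_smul, pow_zero]
      simp [hy]
    rw [hf0, zero_add]
    abel
  rw [hpx]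
  refine Submodule.sum_mem _ ?_
  intro i hi
  rw [Finset.mem_Ico] at hi
  have hmem := hW (k - i) i (by omega) hi.1
  have hle : (⨆ m ∈ Finset.Icc (i+1) k,
        (V k ⊓ Module.End.eigenspace (δ * σ) (lam m k))) ≤
      ⨆ m ∈ Finset.Icc 2 k, (V k ⊓ Module.End.eigenspace (δ * σ) (lam m k)) := by
    refine iSup₂_le ?_
    intro m hm
    rw [Finset.mem_Icc] at hm
    have hm' : m ∈ Finset.Icc 2 k := Finset.mem_Icc.mpr ⟨by omega, hm.2⟩
    exact le_iSup₂ (f := fun m (_ : m ∈ Finset.Icc 2 k) =>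
      (V k ⊓ Module.End.eigenspace (δ * σ) (lam m k))) m hm'
  exact Submodule.smul_mem _ _ (hle hmem)
end

section
/- In the codimension-one deformation algebra 𝒟^∞W_1 (the free graded-commutative algebra on odd generators h_{(l)}, l ≥ 0, and even generators c_{(l)}, l ≥ 0, modulo the ideal 𝓘 generated by all δ̃^k(c_{(0)}²), k ≥ 0), every element of the form c_{(i)} c_{(j)} c_{(k)} with i + j + k ≤ 5 is zero. -/
open MvPolynomial

/-- The relation `δ̃^k(c_{(0)}²) = Σ_i C(k,i) c_{(i)} c_{(k−i)}` in the polynomial part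
`ℝ[c_{(b)}]` of `𝒟^∞W̃_1`, with `c_{(l)}` modeled by the variable `X l`. -/
noncomputable def rel (k : ℕ) : MvPolynomial ℕ ℝ :=
  ∑ i ∈ Finset.range (k + 1), (k.choose i : ℝ) • (X i * X (k - i))

private lemma rel0 : rel 0 = X 0 * X 0 := by
  norm_num [rel, Finset.sum_range_succ, smul_eq_C_mul]
private lemma rel1 : rel 1 = 2 * (X 0 * X 1) := by
  norm_num [rel, Finset.sum_range_succ, smul_eq_C_mul]; ring
private lemma rel2 : rel 2 = 2 * (X 0 * X 2) + 2 * (X 1 * X 1) := by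
  norm_num [rel, Finset.sum_range_succ, smul_eq_C_mul]; ring
private lemma rel3 : rel 3 = 2 * (X 0 * X 3) + 6 * (X 1 * X 2) := by
  norm_num [rel, Finset.sum_range_succ, smul_eq_C_mul, Nat.choose]; ring
private lemma rel4 : rel 4 = 2 * (X 0 * X 4) + 8 * (X 1 * X 3) + 6 * (X 2 * X 2) := by
  norm_num [rel, Finset.sum_range_succ, smul_eq_C_mul, Nat.choose]; ring

private lemma hrel (t : ℕ) : rel t ∈ Ideal.span (Set.range rel) :=
  Ideal.subset_span ⟨t, rfl⟩

private lemma memeq {p q : MvPolynomial ℕ ℝ} (h : p = q)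
    (hq : q ∈ Ideal.span (Set.range rel)) : p ∈ Ideal.span (Set.range rel) := h ▸ hq

private lemma cancel (n : ℕ) (hn : n ≠ 0) {p : MvPolynomial ℕ ℝ}
    (h : (n : MvPolynomial ℕ ℝ) * p ∈ Ideal.span (Set.range rel)) :
    p ∈ Ideal.span (Set.range rel) := by
  have e : p = C ((n : ℝ)⁻¹) * ((n : MvPolynomial ℕ ℝ) * p) := by
    rw [show ((n : MvPolynomial ℕ ℝ)) = C (n : ℝ) by simp, ← mul_assoc, ← C_mul,
      inv_mul_cancel₀ (by exact_mod_cast hn), C_1, one_mul]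
  rw [e]; exact Ideal.mul_mem_left _ _ h

private lemma h00n (n : ℕ) : X 0 * X 0 * X n ∈ Ideal.span (Set.range rel) :=
  memeq (q := X n * rel 0) (by rw [rel0]; ring) (Ideal.mul_mem_left _ _ (hrel 0))

private lemma h01n (n : ℕ) : X 0 * X 1 * X n ∈ Ideal.span (Set.range rel) := by
  refine cancel 2 (by norm_num) (memeq (q := X n * rel 1) (by rw [rel1]; ring1)
    (Ideal.mul_mem_left _ _ (hrel 1)))

private lemma h111 : X 1 * X 1 * X 1 ∈ Ideal.span (Set.range rel) := by
  refine cancel 2 (by norm_num) (memeq (q := X 1 * rel 2 - X 2 * rel 1)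
    (by rw [rel1, rel2]; ring1)
    (sub_mem (Ideal.mul_mem_left _ _ (hrel 2)) (Ideal.mul_mem_left _ _ (hrel 1))))

private lemma h112 : X 1 * X 1 * X 2 ∈ Ideal.span (Set.range rel) := by
  refine cancel 6 (by norm_num) (memeq (q := X 1 * rel 3 - X 3 * rel 1)
    (by rw [rel1, rel3]; ring1)
    (sub_mem (Ideal.mul_mem_left _ _ (hrel 3)) (Ideal.mul_mem_left _ _ (hrel 1))))

private lemma h022 : X 0 * X 2 * X 2 ∈ Ideal.span (Set.range rel) := by
  refine cancel 6 (by norm_num)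
    (memeq (q := (3 * X 2) * rel 2 - X 1 * rel 3 + X 3 * rel 1)
      (by rw [rel1, rel2, rel3]; ring1)
      (add_mem (sub_mem (Ideal.mul_mem_left _ _ (hrel 2)) (Ideal.mul_mem_left _ _ (hrel 3)))
        (Ideal.mul_mem_left _ _ (hrel 1))))

private lemma h113 : X 1 * X 1 * X 3 ∈ Ideal.span (Set.range rel) := by
  refine cancel 10 (by norm_num)
    (memeq (q := X 3 * rel 2 - X 2 * rel 3 + X 1 * rel 4 - X 4 * rel 1)
      (by rw [rel1, rel2, rel3, rel4]; ring1)
      (sub_mem (add_mem (sub_mem (Ideal.mul_mem_left _ _ (hrel 2))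
        (Ideal.mul_mem_left _ _ (hrel 3))) (Ideal.mul_mem_left _ _ (hrel 4)))
        (Ideal.mul_mem_left _ _ (hrel 1))))

private lemma h023 : X 0 * X 2 * X 3 ∈ Ideal.span (Set.range rel) := by
  refine cancel 10 (by norm_num)
    (memeq (q := X 2 * rel 3 - X 1 * rel 4 + X 4 * rel 1 + (4 * X 3) * rel 2)
      (by rw [rel1, rel2, rel3, rel4]; ring1)
      (add_mem (add_mem (sub_mem (Ideal.mul_mem_left _ _ (hrel 3))
        (Ideal.mul_mem_left _ _ (hrel 4))) (Ideal.mul_mem_left _ _ (hrel 1)))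
        (Ideal.mul_mem_left _ _ (hrel 2))))

private lemma h122 : X 1 * X 2 * X 2 ∈ Ideal.span (Set.range rel) := by
  refine cancel 30 (by norm_num)
    (memeq (q := (4 * X 2) * rel 3 + X 1 * rel 4 - X 4 * rel 1 - (4 * X 3) * rel 2)
      (by rw [rel1, rel2, rel3, rel4]; ring1)
      (sub_mem (sub_mem (add_mem (Ideal.mul_mem_left _ _ (hrel 3))
        (Ideal.mul_mem_left _ _ (hrel 4))) (Ideal.mul_mem_left _ _ (hrel 1)))
        (Ideal.mul_mem_left _ _ (hrel 2))))

/-- In the codimension-one deformation algebra `𝒟^∞W_1` — the quotient by the ideal `𝓘`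
generated by all `δ̃^k(c_{(0)}²)`, `k ≥ 0` — every element of the form
`c_{(i)} c_{(j)} c_{(k)}` with `i + j + k ≤ 5` is zero, i.e. `c_{(i)} c_{(j)} c_{(k)}`
belongs to the ideal `𝓘`. -/
theorem stmt14 (i j k : ℕ) (h : i + j + k ≤ 5) :
    X i * X j * X k ∈ Ideal.span (Set.range rel) := by
  have hi : i ≤ 5 := by omega
  have hj : j ≤ 5 := by omega
  have hk : k ≤ 5 := by omega
  interval_cases i <;> interval_cases j <;> interval_cases k <;>
    first
      | omega
      | (refine memeq ?_ (h00n 0); ring1)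
      | (refine memeq ?_ (h00n 1); ring1)
      | (refine memeq ?_ (h00n 2); ring1)
      | (refine memeq ?_ (h00n 3); ring1)
      | (refine memeq ?_ (h00n 4); ring1)
      | (refine memeq ?_ (h00n 5); ring1)
      | (refine memeq ?_ (h01n 1); ring1)
      | (refine memeq ?_ (h01n 2); ring1)
      | (refine memeq ?_ (h01n 3); ring1)
      | (refine memeq ?_ (h01n 4); ring1)
      | (refine memeq ?_ h111; ring1)
      | (refine memeq ?_ h112; ring1)
      | (refine memeq ?_ h022; ring1)
      | (refine memeq ?_ h113; ring1)
      | (refine memeq ?_ h023; ring1)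
      | (refine memeq ?_ h122; ring1)
end
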